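/- Let r > 0 and H be real numbers, and let real numbers Λ, E, p², B, q satisfy the Dirac equation −E + (H + 5 − 4qB)/(4r) = 0 together with the two Einstein equations (2 + H)/r² − Λ = 2B²/r⁴ + E·p² and −H/r² + Λ = −2B²/r⁴ + (H + 1 + 4qB)·p²/(4r). If p² ≠ 0, then H + 3 ≠ 0 and p² = 4/(r(H + 3)). -/

import Mathlib

/-- the Dirac equation together with the (00) and (11) Einstein
equations and p² ≠ 0 force H + 3 ≠ 0 and p² = 4/(r(H+3)). -/
theorem stmt_2 (r H Λ E p2 B q : ℝ) (hr : 0 < r)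
    (dirac : -E + (H + 5 - 4 * q * B) / (4 * r) = 0)
    (ein00 : (2 + H) / r ^ 2 - Λ = 2 * B ^ 2 / r ^ 4 + E * p2)
    (ein11 : -H / r ^ 2 + Λ = -2 * B ^ 2 / r ^ 4 + (H + 1 + 4 * q * B) * p2 / (4 * r))
    (hp2 : p2 ≠ 0) :
    H + 3 ≠ 0 ∧ p2 = 4 / (r * (H + 3)) := by
  have hr0 : r ≠ 0 := ne_of_gt hr
  have key : p2 * (H + 3) * r = 4 := by
    field_simp at dirac ein00 ein11
    have h5 : (2 * (H + 3) * p2 * r - 8) * r ^ 5 = 0 := by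
      linear_combination -(4 * r ^ 3 * ein00) - r ^ 3 * ein11 + p2 * r ^ 6 * dirac
    rcases mul_eq_zero.mp h5 with h | h
    · linarith
    · exact absurd h (pow_ne_zero 5 hr0)
  have h3 : H + 3 ≠ 0 := by
    intro h
    rw [h, mul_zero, zero_mul] at key; norm_num at key
  refine ⟨h3, ?_⟩
  field_simp
  linarith [key]
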